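/- There exists a top-down tree automaton A = (Σ, Q, δ, I) for which P(<up(<dwincl), <dw) is not good for pruning, i.e., L(Prune(A, P(<up(<dwincl), <dw))) ≠ L(A), where <dwincl = ⊆dw ∖ (⊆dw)⁻¹ is the strict version of downward trace inclusion, ≼up(<dwincl) is the maximal upward simulation induced by <dwincl, <up(<dwincl) = ≼up(<dwincl) ∖ (≼up(<dwincl))⁻¹, and <dw = ≼dw ∖ (≼dw)⁻¹ is the strict version of the maximal downward simulation; here P relates rules ⟨p,σ,r₁⋯rₙ⟩ and ⟨p′,σ,r′₁⋯r′ₙ⟩ iff p <up(<dwincl) p′, rᵢ ≼dw r′ᵢ for all i, and rᵢ <dw r′ᵢ for some i. (A witness is the automaton of Figure 1(d) of the paper, over Σ₀ = {c,d}, Σ₁ = {b}, Σ₂ = {a}, which loses the tree a(a(c,c),a(c,c)) after pruning.) -/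

import Mathlib

/-- A tree over a ranked alphabet: a partial map from nodes (lists of child
indices) to symbols, with finite, prefix-closed domain respecting ranks. -/
structure RTree (α : Type) (rank : α → ℕ) where
  label : List ℕ → Option α
  finite : Set.Finite {v : List ℕ | label v ≠ none}
  prefixClosed : ∀ v i, label (v ++ [i]) ≠ none → ∃ a, label v = some a ∧ i < rank a

namespace RTree

variable {α : Type} {rank : α → ℕ}

/-- A tree is closed if every node has all the children prescribed by the rank
of its symbol. -/
def IsClosed (t : RTree α rank) : Prop :=
  ∀ v a, t.label v = some a → ∀ i, i < rank a → t.label (v ++ [i]) ≠ none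

/-- The domain of a run on `t`: the nodes of `t` together with all (possibly
dangling) children of nodes of `t`. -/
def inRunDom (t : RTree α rank) (v : List ℕ) : Prop :=
  t.label v ≠ none ∨ ∃ v' i a, v = v' ++ [i] ∧ t.label v' = some a ∧ i < rank a

/-- A leaf of `t`: a node of `t` with no children in `t`. -/
def IsLeaf (t : RTree α rank) (v : List ℕ) : Prop :=
  t.label v ≠ none ∧ ∀ i, t.label (v ++ [i]) = none

end RTree

/-- A (nondeterministic, top-down) tree automaton, with a distinguished final
state `top`; leaf rules have right-hand side `[top]`, and rules for symbols of
positive rank have right-hand side of length equal to the rank. -/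
structure TDTA (Q α : Type) (rank : α → ℕ) where
  top : Q
  init : Set Q
  delta : Set (Q × α × List Q)
  rank_ok : ∀ τ ∈ delta, (rank τ.2.1 = 0 → τ.2.2 = [top]) ∧
    (0 < rank τ.2.1 → τ.2.2.length = rank τ.2.1)

namespace TDTA

variable {Q α : Type} {rank : α → ℕ}

/-- The right-hand side that a run `π` must match at node `v` labelled `a`. -/
def rhsOf (A : TDTA Q α rank) (a : α) (π : List ℕ → Q) (v : List ℕ) : List Q :=
  if rank a = 0 then [A.top] else (List.range (rank a)).map fun i => π (v ++ [i])

/-- `π` is a run of `A` on the tree `t`. -/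
def IsRun (A : TDTA Q α rank) (t : RTree α rank) (π : List ℕ → Q) : Prop :=
  ∀ v a, t.label v = some a → (π v, a, A.rhsOf a π v) ∈ A.delta

/-- The downward language of a state: closed trees accepted from it. -/
def dlang (A : TDTA Q α rank) (q : Q) : Set (RTree α rank) :=
  {t | t.IsClosed ∧ ∃ π, A.IsRun t π ∧ π [] = q}

/-- The language of the automaton. -/
def lang (A : TDTA Q α rank) : Set (RTree α rank) :=
  {t | ∃ q ∈ A.init, t ∈ A.dlang q}

/-- Pruning: keep exactly the transitions that are maximal w.r.t. `P`. -/
def prune (A : TDTA Q α rank) (P : Q × α × List Q → Q × α × List Q → Prop) :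
    TDTA Q α rank where
  top := A.top
  init := A.init
  delta := {τ | τ ∈ A.delta ∧ ¬∃ τ' ∈ A.delta, P τ τ'}
  rank_ok := fun τ hτ => A.rank_ok τ hτ.1

/-- Downward trace inclusion `q ⊆dw r`. -/
def dwIncl (A : TDTA Q α rank) (q r : Q) : Prop :=
  ∀ t : RTree α rank, t.IsClosed → ∀ π, A.IsRun t π → π [] = q →
    ∃ π', A.IsRun t π' ∧ π' [] = r

/-- Upward trace inclusion `q ⊆up(R) r` induced by a relation `R`. -/
def upIncl (A : TDTA Q α rank) (R : Q → Q → Prop) (q r : Q) : Prop :=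
  (q = A.top → r = A.top) ∧
  ∀ (t : RTree α rank) (v : List ℕ), t.IsLeaf v →
    ∀ πq, A.IsRun t πq → πq v = q →
      ∃ πr, A.IsRun t πr ∧ πr v = r ∧
        (∀ v', v' <+: v → πq v' ∈ A.init → πr v' ∈ A.init) ∧
        ∀ v' x, v' <+: v → v' ≠ v → t.inRunDom (v' ++ [x]) → ¬(v' ++ [x]) <+: v →
          R (πq (v' ++ [x])) (πr (v' ++ [x]))

/-- `D` is a downward simulation on `A`. -/
def IsDwSim (A : TDTA Q α rank) (D : Q → Q → Prop) : Prop :=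
  ∀ q r, D q r → (q = A.top → r = A.top) ∧
    ∀ a qs, (q, a, qs) ∈ A.delta →
      ∃ rs, (r, a, rs) ∈ A.delta ∧ List.Forall₂ D qs rs

/-- The maximal downward simulation `≼dw` (the union of all downward
simulations). -/
def dwSim (A : TDTA Q α rank) (q r : Q) : Prop :=
  ∃ D, A.IsDwSim D ∧ D q r

/-- `U` is an upward simulation on `A` induced by `R`. -/
def IsUpSim (A : TDTA Q α rank) (R U : Q → Q → Prop) : Prop :=
  ∀ q r, U q r → (q = A.top → r = A.top) ∧ (q ∈ A.init → r ∈ A.init) ∧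
    ∀ q' a qs, (q', a, qs) ∈ A.delta → ∀ i : Fin qs.length, qs.get i = q →
      ∃ r' rs, ∃ hlen : rs.length = qs.length, (r', a, rs) ∈ A.delta ∧
        rs.get (Fin.cast hlen.symm i) = r ∧ U q' r' ∧
        ∀ j : Fin qs.length, j ≠ i → R (qs.get j) (rs.get (Fin.cast hlen.symm j))

/-- The maximal upward simulation `≼up(R)` induced by `R`. -/
def upSim (A : TDTA Q α rank) (R : Q → Q → Prop) (q r : Q) : Prop :=
  ∃ U, A.IsUpSim R U ∧ U q r

/-- `W` is a downup-relation on `A`. -/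
def IsDownUp (A : TDTA Q α rank) (W : Q → Q → Prop) : Prop :=
  ∀ p q, W p q → ∀ (t : RTree α rank) (π : List ℕ → Q), A.IsRun t π → π [] = p →
    ∃ π', A.IsRun t π' ∧ π' [] = q ∧ ∀ v, t.inRunDom v → A.upSim W (π v) (π' v)

end TDTA

/-- The strict version `S ∖ S⁻¹` of a relation `S`. -/
def strictOf {Q : Type} (S : Q → Q → Prop) (q r : Q) : Prop := S q r ∧ ¬S r q

/-- Lifting of relations to tuples: pointwise `Dw` everywhere and `Ds` at some
position. -/
def liftStrict {Q : Type} (Dw Ds : Q → Q → Prop) (qs rs : List Q) : Prop :=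
  List.Forall₂ Dw qs rs ∧
    ∃ (i : ℕ) (h : i < qs.length) (h' : i < rs.length), Ds (qs.get ⟨i, h⟩) (rs.get ⟨i, h'⟩)

/-- The pruning relation `P(U, Dl)` comparing transitions with the same symbol:
sources by `U`, target tuples by `Dl`. -/
def pruneRel {Q α : Type} (U : Q → Q → Prop) (Dl : List Q → List Q → Prop) :
    Q × α × List Q → Q × α × List Q → Prop :=
  fun τ τ' => U τ.1 τ'.1 ∧ τ.2.1 = τ'.2.1 ∧ Dl τ.2.2 τ'.2.2

namespace CE

inductive St : Type | top | q0 | q1 | q2 | q3 | qc | qd | qcd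
  deriving DecidableEq

instance : Fintype St where
  elems := {.top, .q0, .q1, .q2, .q3, .qc, .qd, .qcd}
  complete := by intro x; cases x <;> simp

inductive Sym : Type | a | b | c | d
  deriving DecidableEq

instance : Fintype Sym where
  elems := {.a, .b, .c, .d}
  complete := by intro x; cases x <;> simp

open St Sym

def rk : Sym → ℕ
  | .a => 2
  | .b => 1
  | .c => 0
  | .d => 0

abbrev Tr := St × Sym × List St

def del : Set Tr :=
  {τ | τ = (q0, a, [q1, q1]) ∨ τ = (q0, a, [q2, q3]) ∨ τ = (q0, a, [q3, q2]) ∨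
       τ = (q1, a, [qc, qc]) ∨ τ = (q3, a, [qc, qc]) ∨ τ = (q3, a, [qc, qd]) ∨
       τ = (q2, a, [qc, qcd]) ∨ τ = (q3, b, [qc]) ∨
       τ = (qc, c, [top]) ∨ τ = (qd, d, [top]) ∨
       τ = (qcd, c, [top]) ∨ τ = (qcd, d, [top])}

def A : TDTA St Sym rk where
  top := top
  init := {q0}
  delta := del
  rank_ok := by
    rintro τ (rfl|rfl|rfl|rfl|rfl|rfl|rfl|rfl|rfl|rfl|rfl|rfl) <;> simp [rk]

lemma mem_del (τ : Tr) : τ ∈ A.delta ↔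
    (τ = (q0, a, [q1, q1]) ∨ τ = (q0, a, [q2, q3]) ∨ τ = (q0, a, [q3, q2]) ∨
     τ = (q1, a, [qc, qc]) ∨ τ = (q3, a, [qc, qc]) ∨ τ = (q3, a, [qc, qd]) ∨
     τ = (q2, a, [qc, qcd]) ∨ τ = (q3, b, [qc]) ∨
     τ = (qc, c, [top]) ∨ τ = (qd, d, [top]) ∨
     τ = (qcd, c, [top]) ∨ τ = (qcd, d, [top])) := Iff.rfl

lemma m1 : ((q0, a, [q1, q1]) : Tr) ∈ A.delta := by rw [mem_del]; tauto
lemma m2 : ((q0, a, [q2, q3]) : Tr) ∈ A.delta := by rw [mem_del]; tauto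
lemma m3 : ((q0, a, [q3, q2]) : Tr) ∈ A.delta := by rw [mem_del]; tauto
lemma m4 : ((q1, a, [qc, qc]) : Tr) ∈ A.delta := by rw [mem_del]; tauto
lemma m5 : ((q3, a, [qc, qc]) : Tr) ∈ A.delta := by rw [mem_del]; tauto
lemma m6 : ((q3, a, [qc, qd]) : Tr) ∈ A.delta := by rw [mem_del]; tauto
lemma m7 : ((q2, a, [qc, qcd]) : Tr) ∈ A.delta := by rw [mem_del]; tauto
lemma m8 : ((q3, b, [qc]) : Tr) ∈ A.delta := by rw [mem_del]; tauto
lemma m9 : ((qc, c, [top]) : Tr) ∈ A.delta := by rw [mem_del]; tauto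
lemma m10 : ((qd, d, [top]) : Tr) ∈ A.delta := by rw [mem_del]; tauto
lemma m11 : ((qcd, c, [top]) : Tr) ∈ A.delta := by rw [mem_del]; tauto
lemma m12 : ((qcd, d, [top]) : Tr) ∈ A.delta := by rw [mem_del]; tauto

/-! ### inversion lemmas for transitions -/

lemma delta_q0 {x : Sym} {qs : List St} (h : ((q0 : St), x, qs) ∈ A.delta) :
    x = a ∧ (qs = [q1, q1] ∨ qs = [q2, q3] ∨ qs = [q3, q2]) := by
  rcases (mem_del _).mp h with h|h|h|h|h|h|h|h|h|h|h|h <;> simp at h <;> tauto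

lemma delta_q1 {x : Sym} {qs : List St} (h : ((q1 : St), x, qs) ∈ A.delta) :
    x = a ∧ qs = [qc, qc] := by
  rcases (mem_del _).mp h with h|h|h|h|h|h|h|h|h|h|h|h <;> simp at h <;> tauto

lemma delta_q2 {x : Sym} {qs : List St} (h : ((q2 : St), x, qs) ∈ A.delta) :
    x = a ∧ qs = [qc, qcd] := by
  rcases (mem_del _).mp h with h|h|h|h|h|h|h|h|h|h|h|h <;> simp at h <;> tauto

lemma delta_q3 {x : Sym} {qs : List St} (h : ((q3 : St), x, qs) ∈ A.delta) :
    (x = a ∧ (qs = [qc, qc] ∨ qs = [qc, qd])) ∨ (x = b ∧ qs = [qc]) := by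
  rcases (mem_del _).mp h with h|h|h|h|h|h|h|h|h|h|h|h <;> simp at h <;> tauto

lemma delta_qc {x : Sym} {qs : List St} (h : ((qc : St), x, qs) ∈ A.delta) :
    x = c ∧ qs = [top] := by
  rcases (mem_del _).mp h with h|h|h|h|h|h|h|h|h|h|h|h <;> simp at h <;> tauto

lemma delta_qd {x : Sym} {qs : List St} (h : ((qd : St), x, qs) ∈ A.delta) :
    x = d ∧ qs = [top] := by
  rcases (mem_del _).mp h with h|h|h|h|h|h|h|h|h|h|h|h <;> simp at h <;> tauto

lemma delta_qcd {x : Sym} {qs : List St} (h : ((qcd : St), x, qs) ∈ A.delta) :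
    (x = c ∨ x = d) ∧ qs = [top] := by
  rcases (mem_del _).mp h with h|h|h|h|h|h|h|h|h|h|h|h <;> simp at h <;> tauto

/-! ### downward simulation facts -/

lemma isDwSim_eq : A.IsDwSim (· = ·) := by
  rintro q r rfl
  exact ⟨fun h => h, fun x qs hqs => ⟨qs, hqs, List.forall₂_same.mpr fun y _ => rfl⟩⟩

lemma dwSim_refl (q : St) : A.dwSim q q := ⟨_, isDwSim_eq, rfl⟩

def D0 : St → St → Prop := fun q r => q = r ∨ (q = qc ∧ r = qcd) ∨ (q = qd ∧ r = qcd)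

lemma isDwSim_D0 : A.IsDwSim D0 := by
  rintro q r (rfl | ⟨rfl, rfl⟩ | ⟨rfl, rfl⟩)
  · exact ⟨fun h => h, fun x qs hqs =>
      ⟨qs, hqs, List.forall₂_same.mpr fun y _ => Or.inl rfl⟩⟩
  · refine ⟨fun h => St.noConfusion h, fun x qs hqs => ?_⟩
    obtain ⟨rfl, rfl⟩ := delta_qc hqs
    exact ⟨[top], m11, List.Forall₂.cons (Or.inl rfl) List.Forall₂.nil⟩
  · refine ⟨fun h => St.noConfusion h, fun x qs hqs => ?_⟩
    obtain ⟨rfl, rfl⟩ := delta_qd hqs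
    exact ⟨[top], m12, List.Forall₂.cons (Or.inl rfl) List.Forall₂.nil⟩

lemma dwSim_c_cd : A.dwSim qc qcd := ⟨D0, isDwSim_D0, Or.inr (Or.inl ⟨rfl, rfl⟩)⟩
lemma dwSim_d_cd : A.dwSim qd qcd := ⟨D0, isDwSim_D0, Or.inr (Or.inr ⟨rfl, rfl⟩)⟩

lemma not_dwSim_cd_c : ¬ A.dwSim qcd qc := by
  rintro ⟨D, hD, h⟩
  obtain ⟨rs, hrs, -⟩ := (hD _ _ h).2 d [top] m12
  obtain ⟨hc, -⟩ := delta_qc hrs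
  exact Sym.noConfusion hc

lemma not_dwSim_cd_d : ¬ A.dwSim qcd qd := by
  rintro ⟨D, hD, h⟩
  obtain ⟨rs, hrs, -⟩ := (hD _ _ h).2 c [top] m11
  obtain ⟨hc, -⟩ := delta_qd hrs
  exact Sym.noConfusion hc

lemma sdwSim_c_cd : strictOf A.dwSim qc qcd := ⟨dwSim_c_cd, not_dwSim_cd_c⟩
lemma sdwSim_d_cd : strictOf A.dwSim qd qcd := ⟨dwSim_d_cd, not_dwSim_cd_d⟩

/-! ### rhsOf computations -/

lemma rhsOf_a (π : List ℕ → St) (v : List ℕ) :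
    A.rhsOf a π v = [π (v ++ [0]), π (v ++ [1])] := by
  simp [TDTA.rhsOf, rk, List.range_succ]

lemma rhsOf_b (π : List ℕ → St) (v : List ℕ) :
    A.rhsOf b π v = [π (v ++ [0])] := by
  simp [TDTA.rhsOf, rk, List.range_succ]

lemma rhsOf_rank0 (x : Sym) (hx : rk x = 0) (π : List ℕ → St) (v : List ℕ) :
    A.rhsOf x π v = [top] := by
  simp [TDTA.rhsOf, hx]
  rfl

lemma rhsOf_congr {x : Sym} {π π' : List ℕ → St} {v : List ℕ}
    (h : ∀ i, i < rk x → π (v ++ [i]) = π' (v ++ [i])) :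
    A.rhsOf x π v = A.rhsOf x π' v := by
  unfold TDTA.rhsOf
  split
  · rfl
  · exact List.map_congr_left fun i hi => h i (List.mem_range.mp hi)

lemma append_ne_nil' (v : List ℕ) (i : ℕ) : v ++ [i] ≠ [] := by simp

lemma app_eq_one {v : List ℕ} {i x : ℕ} (h : v ++ [i] = [x]) : v = [] ∧ i = x := by
  cases v with
  | nil => simp_all
  | cons z w => cases w <;> simp_all

lemma app_eq_two {v : List ℕ} {i x y : ℕ} (h : v ++ [i] = [x, y]) : v = [x] ∧ i = y := by
  cases v with
  | nil => simp_all
  | cons z w =>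
    simp only [List.cons_append, List.cons.injEq] at h
    obtain ⟨rfl, h⟩ := h
    obtain ⟨rfl, rfl⟩ := app_eq_one h
    exact ⟨rfl, rfl⟩

/-! ### the tree b(c) and downward trace inclusion facts -/

def tb : RTree Sym rk where
  label := fun v => if v = [] then some b else if v = [0] then some c else none
  finite := by
    apply Set.Finite.subset (List.finite_toSet [([] : List ℕ), [0]])
    intro v hv
    simp only [Set.mem_setOf_eq] at hv
    by_cases h1 : v = [] <;> by_cases h2 : v = [0] <;> simp_all [Set.mem_setOf_eq]
  prefixClosed := by
    intro v i h
    by_cases h0 : v ++ [i] = []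
    · exact absurd h0 (append_ne_nil' v i)
    · by_cases h1 : v ++ [i] = [0]
      · obtain ⟨rfl, rfl⟩ := app_eq_one h1
        exact ⟨b, by simp, by simp [rk]⟩
      · simp [h0, h1] at h

lemma tb_closed : tb.IsClosed := by
  intro v x hx i hi
  simp only [tb] at hx ⊢
  split at hx
  · rename_i hv
    subst hv
    simp only [Option.some.injEq] at hx
    subst hx
    simp [rk] at hi
    subst hi
    simp
  · split at hx
    · rename_i hv
      simp only [Option.some.injEq] at hx
      subst hx
      simp [rk] at hi
    · simp at hx

def pib : List ℕ → St := fun v => if v = [] then q3 else if v = [0] then qc else top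

lemma pib_nil : pib [] = q3 := rfl
lemma pib_zero : pib [0] = qc := rfl

lemma pib_run : A.IsRun tb pib := by
  intro v x hx
  simp only [tb] at hx
  split at hx
  · rename_i hv
    subst hv
    simp only [Option.some.injEq] at hx; subst hx
    rw [rhsOf_b]
    exact m8
  · split at hx
    · rename_i hv
      subst hv
      simp only [Option.some.injEq] at hx; subst hx
      rw [rhsOf_rank0 c rfl]
      exact m9
    · simp at hx

lemma not_dwIncl_q3_q1 : ¬ A.dwIncl q3 q1 := by
  intro h
  obtain ⟨π', hrun, hroot⟩ := h tb tb_closed pib pib_run rfl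
  have h0 := hrun [] b (by simp [tb])
  rw [hroot] at h0
  obtain ⟨hc, -⟩ := delta_q1 h0
  exact Sym.noConfusion hc

lemma not_dwIncl_q3_q2 : ¬ A.dwIncl q3 q2 := by
  intro h
  obtain ⟨π', hrun, hroot⟩ := h tb tb_closed pib pib_run rfl
  have h0 := hrun [] b (by simp [tb])
  rw [hroot] at h0
  obtain ⟨hc, -⟩ := delta_q2 h0
  exact Sym.noConfusion hc

lemma dwIncl_q1_q3 : A.dwIncl q1 q3 := by
  intro t ht π hπ hroot
  refine ⟨Function.update π [] q3, ?_, by simp⟩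
  intro v x hx
  by_cases hv : v = []
  · subst hv
    have h0 := hπ [] x hx
    rw [hroot] at h0
    obtain ⟨rfl, hrhs⟩ := delta_q1 h0
    have hr : A.rhsOf a (Function.update π [] q3) [] = A.rhsOf a π [] := by
      refine (rhsOf_congr fun i _ => ?_).symm
      rw [Function.update_of_ne (append_ne_nil' [] i)]
    rw [Function.update_self, hr, hrhs]
    exact m5
  · have h0 := hπ v x hx
    have hr : A.rhsOf x (Function.update π [] q3) v = A.rhsOf x π v := by
      refine (rhsOf_congr fun i _ => ?_).symm
      rw [Function.update_of_ne (append_ne_nil' v i)]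
    rw [Function.update_of_ne hv, hr]
    exact h0

lemma dwIncl_q2_q3 : A.dwIncl q2 q3 := by
  intro t ht π hπ hroot
  by_cases hroot_lab : t.label [] = none
  · -- degenerate: the tree is empty, every label is none
    have hall : ∀ v, t.label v = none := by
      intro v
      induction v using List.reverseRecOn with
      | nil => exact hroot_lab
      | append_singleton w i ih =>
        by_contra hc
        obtain ⟨x, hx, -⟩ := t.prefixClosed w i hc
        rw [ih] at hx; exact nomatch hx
    exact ⟨fun _ => q3, fun v x hx => absurd hx (by rw [hall v]; simp), rfl⟩
  · obtain ⟨x0, hx0⟩ := Option.ne_none_iff_exists'.mp hroot_lab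
    have h0 := hπ [] x0 hx0
    rw [hroot] at h0
    obtain ⟨rfl, hrhs⟩ := delta_q2 h0
    rw [rhsOf_a] at hrhs
    simp only [List.cons.injEq, List.nil_append] at hrhs
    obtain ⟨hπ0, hπ1, -⟩ := hrhs
    have h1ne : t.label [1] ≠ none := ht [] a hx0 1 (by simp [rk])
    obtain ⟨x1, hx1⟩ := Option.ne_none_iff_exists'.mp h1ne
    have h1 := hπ [1] x1 hx1
    rw [hπ1] at h1
    obtain ⟨hx1cd, -⟩ := delta_qcd h1
    set s : St := if x1 = c then qc else qd with hs
    set π' : List ℕ → St := Function.update (Function.update π [] q3) [1] s with hπ'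
    have hπ'nil : π' [] = q3 := by
      rw [hπ', Function.update_of_ne (by simp), Function.update_self]
    have hπ'one : π' [1] = s := by rw [hπ', Function.update_self]
    have hπ'other : ∀ w, w ≠ [] → w ≠ [1] → π' w = π w := by
      intro w h1 h2
      rw [hπ', Function.update_of_ne h2, Function.update_of_ne h1]
    refine ⟨π', ?_, hπ'nil⟩
    intro v x hx
    by_cases hv : v = []
    · subst hv
      rw [hx0] at hx
      simp only [Option.some.injEq] at hx; subst hx
      rw [hπ'nil, rhsOf_a]
      have e0 : π' [0] = qc := by rw [hπ'other [0] (by simp) (by simp), hπ0]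
      simp only [List.nil_append, e0, hπ'one]
      rcases hx1cd with rfl | rfl
      · rw [hs]; simp only [reduceIte]; exact m5
      · rw [hs]; simp only [reduceCtorEq, reduceIte]; exact m6
    · by_cases hv1 : v = [1]
      · subst hv1
        rw [hx1] at hx
        simp only [Option.some.injEq] at hx; subst hx
        rw [hπ'one]
        rcases hx1cd with rfl | rfl
        · rw [rhsOf_rank0 c rfl, hs]; simp only [reduceIte]; exact m9
        · rw [rhsOf_rank0 d rfl, hs]; simp only [reduceCtorEq, reduceIte]; exact m10
      · have h0 := hπ v x hx
        have hr : A.rhsOf x π' v = A.rhsOf x π v := by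
          refine (rhsOf_congr fun i _ => ?_).symm
          refine (hπ'other (v ++ [i]) (append_ne_nil' v i) ?_).symm
          intro hc
          exact hv (app_eq_one hc).1
        rw [hπ'other v hv hv1, hr]
        exact h0

lemma sdwIncl_q1_q3 : strictOf A.dwIncl q1 q3 := ⟨dwIncl_q1_q3, not_dwIncl_q3_q1⟩
lemma sdwIncl_q2_q3 : strictOf A.dwIncl q2 q3 := ⟨dwIncl_q2_q3, not_dwIncl_q3_q2⟩

end CE
namespace CE

open St Sym

/-! ### upward simulation facts -/

def U0 : St → St → Prop := fun q r =>
  (q = q1 ∧ r = q2) ∨ (q = q3 ∧ r = q2) ∨ (q = q0 ∧ r = q0)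

lemma isUpSim_U0 : A.IsUpSim (strictOf A.dwIncl) U0 := by
  rintro q r (⟨rfl, rfl⟩ | ⟨rfl, rfl⟩ | ⟨rfl, rfl⟩)
  · refine ⟨fun h => St.noConfusion h, fun h => absurd h (by simp [A]), ?_⟩
    intro q' x qs hqs i hi
    rcases (mem_del _).mp hqs with h|h|h|h|h|h|h|h|h|h|h|h <;>
        simp only [Prod.mk.injEq] at h <;> obtain ⟨rfl, rfl, rfl⟩ := h <;>
        fin_cases i <;> simp only [List.get] at hi <;>
        try exact absurd hi (by decide)
    · -- transition (q0, a, [q1,q1]), position 0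
      refine ⟨q0, [q2, q3], rfl, m2, rfl, Or.inr (Or.inr ⟨rfl, rfl⟩), ?_⟩
      intro j hj
      fin_cases j
      · exact absurd rfl hj
      · exact sdwIncl_q1_q3
    · -- transition (q0, a, [q1,q1]), position 1
      refine ⟨q0, [q3, q2], rfl, m3, rfl, Or.inr (Or.inr ⟨rfl, rfl⟩), ?_⟩
      intro j hj
      fin_cases j
      · exact sdwIncl_q1_q3
      · exact absurd rfl hj
  · refine ⟨fun h => St.noConfusion h, fun h => absurd h (by simp [A]), ?_⟩
    intro q' x qs hqs i hi
    rcases (mem_del _).mp hqs with h|h|h|h|h|h|h|h|h|h|h|h <;>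
        simp only [Prod.mk.injEq] at h <;> obtain ⟨rfl, rfl, rfl⟩ := h <;>
        fin_cases i <;> simp only [List.get] at hi <;>
        try exact absurd hi (by decide)
    · -- transition (q0, a, [q2,q3]), position 1
      refine ⟨q0, [q3, q2], rfl, m3, rfl, Or.inr (Or.inr ⟨rfl, rfl⟩), ?_⟩
      intro j hj
      fin_cases j
      · exact sdwIncl_q2_q3
      · exact absurd rfl hj
    · -- transition (q0, a, [q3,q2]), position 0
      refine ⟨q0, [q2, q3], rfl, m2, rfl, Or.inr (Or.inr ⟨rfl, rfl⟩), ?_⟩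
      intro j hj
      fin_cases j
      · exact absurd rfl hj
      · exact sdwIncl_q2_q3
  · refine ⟨fun h => St.noConfusion h, fun h => h, ?_⟩
    intro q' x qs hqs i hi
    rcases (mem_del _).mp hqs with h|h|h|h|h|h|h|h|h|h|h|h <;>
        simp only [Prod.mk.injEq] at h <;> obtain ⟨rfl, rfl, rfl⟩ := h <;>
        fin_cases i <;> simp only [List.get] at hi <;>
        exact absurd hi (by decide)

lemma upSim_q1_q2 : A.upSim (strictOf A.dwIncl) q1 q2 :=
  ⟨U0, isUpSim_U0, Or.inl ⟨rfl, rfl⟩⟩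

lemma upSim_q3_q2 : A.upSim (strictOf A.dwIncl) q3 q2 :=
  ⟨U0, isUpSim_U0, Or.inr (Or.inl ⟨rfl, rfl⟩)⟩

lemma not_upSim_q2_q1 : ¬ A.upSim (strictOf A.dwIncl) q2 q1 := by
  rintro ⟨U, hU, hq⟩
  obtain ⟨r', rs, hlen, hmem, hget, -, hsib⟩ :=
    (hU _ _ hq).2.2 q0 a [q2, q3] m2 ⟨0, by decide⟩ rfl
  rcases (mem_del _).mp hmem with h|h|h|h|h|h|h|h|h|h|h|h <;>
      simp only [Prod.mk.injEq] at h
  · obtain ⟨rfl, -, rfl⟩ := h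
    have := hsib ⟨1, by decide⟩ (by decide)
    exact not_dwIncl_q3_q1 this.1
  · obtain ⟨rfl, -, rfl⟩ := h; exact St.noConfusion hget
  · obtain ⟨rfl, -, rfl⟩ := h; exact St.noConfusion hget
  · obtain ⟨rfl, -, rfl⟩ := h; exact St.noConfusion hget
  · obtain ⟨rfl, -, rfl⟩ := h; exact St.noConfusion hget
  · obtain ⟨rfl, -, rfl⟩ := h; exact St.noConfusion hget
  · obtain ⟨rfl, -, rfl⟩ := h; exact St.noConfusion hget
  · exact absurd h.2.1 (by decide)
  · exact absurd h.2.1 (by decide)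
  · exact absurd h.2.1 (by decide)
  · exact absurd h.2.1 (by decide)
  · exact absurd h.2.1 (by decide)

lemma not_upSim_q2_q3 : ¬ A.upSim (strictOf A.dwIncl) q2 q3 := by
  rintro ⟨U, hU, hq⟩
  obtain ⟨r', rs, hlen, hmem, hget, -, hsib⟩ :=
    (hU _ _ hq).2.2 q0 a [q2, q3] m2 ⟨0, by decide⟩ rfl
  rcases (mem_del _).mp hmem with h|h|h|h|h|h|h|h|h|h|h|h <;>
      simp only [Prod.mk.injEq] at h
  · obtain ⟨rfl, -, rfl⟩ := h; exact St.noConfusion hget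
  · obtain ⟨rfl, -, rfl⟩ := h; exact St.noConfusion hget
  · obtain ⟨rfl, -, rfl⟩ := h
    have := hsib ⟨1, by decide⟩ (by decide)
    exact not_dwIncl_q3_q2 this.1
  · obtain ⟨rfl, -, rfl⟩ := h; exact St.noConfusion hget
  · obtain ⟨rfl, -, rfl⟩ := h; exact St.noConfusion hget
  · obtain ⟨rfl, -, rfl⟩ := h; exact St.noConfusion hget
  · obtain ⟨rfl, -, rfl⟩ := h; exact St.noConfusion hget
  · exact absurd h.2.1 (by decide)
  · exact absurd h.2.1 (by decide)
  · exact absurd h.2.1 (by decide)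
  · exact absurd h.2.1 (by decide)
  · exact absurd h.2.1 (by decide)

/-! ### the pruning relation -/

def P : Tr → Tr → Prop :=
  pruneRel (strictOf (A.upSim (strictOf A.dwIncl)))
    (liftStrict A.dwSim (strictOf A.dwSim))

lemma P47 : P (q1, a, [qc, qc]) (q2, a, [qc, qcd]) :=
  ⟨⟨upSim_q1_q2, not_upSim_q2_q1⟩, rfl,
    List.Forall₂.cons (dwSim_refl qc) (List.Forall₂.cons dwSim_c_cd List.Forall₂.nil),
    1, by decide, by decide, sdwSim_c_cd⟩

lemma P57 : P (q3, a, [qc, qc]) (q2, a, [qc, qcd]) :=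
  ⟨⟨upSim_q3_q2, not_upSim_q2_q3⟩, rfl,
    List.Forall₂.cons (dwSim_refl qc) (List.Forall₂.cons dwSim_c_cd List.Forall₂.nil),
    1, by decide, by decide, sdwSim_c_cd⟩

lemma P67 : P (q3, a, [qc, qd]) (q2, a, [qc, qcd]) :=
  ⟨⟨upSim_q3_q2, not_upSim_q2_q3⟩, rfl,
    List.Forall₂.cons (dwSim_refl qc) (List.Forall₂.cons dwSim_d_cd List.Forall₂.nil),
    1, by decide, by decide, sdwSim_d_cd⟩

/-! ### the lost tree a(a(c,c), a(c,c)) -/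

def labT : List ℕ → Option Sym := fun v =>
  if v = [] ∨ v = [0] ∨ v = [1] then some a
  else if v = [0, 0] ∨ v = [0, 1] ∨ v = [1, 0] ∨ v = [1, 1] then some c
  else none

def T : RTree Sym rk where
  label := labT
  finite := by
    apply Set.Finite.subset
      (List.finite_toSet [([] : List ℕ), [0], [1], [0, 0], [0, 1], [1, 0], [1, 1]])
    intro v hv
    simp only [Set.mem_setOf_eq, labT] at hv
    split at hv
    · rename_i h; simp only [Set.mem_setOf_eq, List.mem_cons]; tauto
    · split at hv
      · rename_i h; simp only [Set.mem_setOf_eq, List.mem_cons]; tauto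
      · simp at hv
  prefixClosed := by
    intro v i h
    simp only [labT] at h
    split at h
    · rename_i hm
      rcases hm with hm | hm | hm
      · exact absurd hm (append_ne_nil' v i)
      · obtain ⟨rfl, rfl⟩ := app_eq_one hm
        exact ⟨a, by simp [labT], by simp [rk]⟩
      · obtain ⟨rfl, rfl⟩ := app_eq_one hm
        exact ⟨a, by simp [labT], by simp [rk]⟩
    · split at h
      · rename_i hm
        rcases hm with hm | hm | hm | hm <;> obtain ⟨rfl, rfl⟩ := app_eq_two hm <;>
          exact ⟨a, by simp [labT], by simp [rk]⟩
      · simp at h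

lemma T_closed : T.IsClosed := by
  intro v x hx i hi
  simp only [T, labT] at hx ⊢
  split at hx
  · rename_i hm
    simp only [Option.some.injEq] at hx; subst hx
    simp only [rk] at hi
    interval_cases i <;> rcases hm with rfl | rfl | rfl <;> simp
  · split at hx
    · simp only [Option.some.injEq] at hx; subst hx
      simp [rk] at hi
    · simp at hx

def piT : List ℕ → St := fun v =>
  if v = [] then q0
  else if v = [0] ∨ v = [1] then q1
  else if v = [0, 0] ∨ v = [0, 1] ∨ v = [1, 0] ∨ v = [1, 1] then qc
  else top

lemma piT_run : A.IsRun T piT := by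
  intro v x hx
  simp only [T, labT] at hx
  split at hx
  · rename_i hm
    simp only [Option.some.injEq] at hx; subst hx
    rw [rhsOf_a]
    rcases hm with rfl | rfl | rfl
    · exact m1
    · exact m4
    · exact m4
  · split at hx
    · rename_i hm
      simp only [Option.some.injEq] at hx; subst hx
      rw [rhsOf_rank0 c rfl]
      rcases hm with rfl | rfl | rfl | rfl <;> exact m9
    · simp at hx

lemma T_mem : T ∈ A.lang :=
  ⟨q0, rfl, T_closed, piT, piT_run, rfl⟩

/-! ### the lost tree is not accepted after pruning -/

lemma T_not_mem_prune : T ∉ (A.prune P).lang := by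
  rintro ⟨q, hq, hcl, π, hrun, hroot⟩
  have hq0 : q = q0 := hq
  subst hq0
  have hrhs : ∀ v, (A.prune P).rhsOf a π v = [π (v ++ [0]), π (v ++ [1])] :=
    fun v => rhsOf_a π v
  have h0 := hrun [] a (by simp [T, labT])
  rw [hroot, hrhs] at h0
  obtain ⟨h0d, -⟩ := h0
  obtain ⟨-, h0rhs⟩ := delta_q0 h0d
  simp only [List.nil_append, List.cons.injEq, and_true] at h0rhs
  rcases h0rhs with ⟨e0, e1⟩ | ⟨e0, e1⟩ | ⟨e0, e1⟩
  · -- root rule (q0, a, [q1, q1]); look at node [0], state q1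
    have h1 := hrun [0] a (by simp [T, labT])
    rw [e0, hrhs] at h1
    obtain ⟨h1d, h1n⟩ := h1
    obtain ⟨-, h1rhs⟩ := delta_q1 h1d
    rw [h1rhs] at h1n
    exact h1n ⟨(q2, a, [qc, qcd]), m7, P47⟩
  · -- root rule (q0, a, [q2, q3]); look at node [1], state q3
    have h1 := hrun [1] a (by simp [T, labT])
    rw [e1, hrhs] at h1
    obtain ⟨h1d, h1n⟩ := h1
    rcases delta_q3 h1d with ⟨-, h1rhs | h1rhs⟩ | ⟨hb, -⟩
    · rw [h1rhs] at h1n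
      exact h1n ⟨(q2, a, [qc, qcd]), m7, P57⟩
    · rw [h1rhs] at h1n
      exact h1n ⟨(q2, a, [qc, qcd]), m7, P67⟩
    · exact Sym.noConfusion hb
  · -- root rule (q0, a, [q3, q2]); look at node [0], state q3
    have h1 := hrun [0] a (by simp [T, labT])
    rw [e0, hrhs] at h1
    obtain ⟨h1d, h1n⟩ := h1
    rcases delta_q3 h1d with ⟨-, h1rhs | h1rhs⟩ | ⟨hb, -⟩
    · rw [h1rhs] at h1n
      exact h1n ⟨(q2, a, [qc, qcd]), m7, P57⟩
    · rw [h1rhs] at h1n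
      exact h1n ⟨(q2, a, [qc, qcd]), m7, P67⟩
    · exact Sym.noConfusion hb

end CE
/-- There is a tree automaton for which `P(<up(<dwincl), <dw)` is not good for
pruning. -/
theorem statement_15 : ∃ (Q α : Type) (_ : Fintype Q) (_ : Fintype α)
    (rank : α → ℕ) (A : TDTA Q α rank),
    (A.prune (pruneRel (strictOf (A.upSim (strictOf A.dwIncl)))
      (liftStrict A.dwSim (strictOf A.dwSim)))).lang ≠ A.lang := by
  refine ⟨CE.St, CE.Sym, inferInstance, inferInstance, CE.rk, CE.A, fun h => ?_⟩
  exact CE.T_not_mem_prune (h.symm ▸ CE.T_mem)
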